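/- The rate function R(Λ,Q) of the uniformly quantized Laplace source is strictly decreasing in Q for fixed Λ > 0, and R(Λ,Q) → 0 as Q → ∞. -/

import Mathlib

/-- Closed-form rate of the uniformly quantized Laplace(Λ) source. -/
noncomputable def quantLaplaceRate (Λ Q : ℝ) : ℝ :=
  -((1 - Real.exp (-Λ * Q / 2)) * Real.logb 2 (1 - Real.exp (-Λ * Q / 2)))
    - (Real.exp (-Λ * Q / 2) / Real.log 2)
      * (Real.log ((1 - Real.exp (-Λ * Q)) / 2) + Λ * Q / 2
          - Λ * Q / (1 - Real.exp (-Λ * Q)))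

open Real Filter Set

noncomputable def auxF1 (x : ℝ) : ℝ := -Real.log (1 - x) + x * (Real.log 2 - Real.log (1 + x))

noncomputable def auxG (x : ℝ) : ℝ := x * (1 + x ^ 2) / (1 - x ^ 2) * (-Real.log x)

/-- key log inequality -/
lemma auxLogLt {x : ℝ} (hx0 : 0 < x) (hx1 : x < 1) :
    2 * (1 - x) / (1 + x) < -Real.log x := by
  have key : StrictAntiOn (fun x : ℝ => -Real.log x - 2 * (1 - x) / (1 + x)) (Set.Ioc 0 1) := by
    apply strictAntiOn_of_hasDerivWithinAt_neg (f' := fun x => -x⁻¹ + 4 / (1 + x) ^ 2)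
      (convex_Ioc (0:ℝ) 1)
    · apply ContinuousOn.sub
      · exact (Real.continuousOn_log.mono (by intro y hy; simp; exact (hy.1).ne')).neg
      · apply ContinuousOn.div (by fun_prop) (by fun_prop)
        intro y hy; simp only [Set.mem_Ioc] at hy; intro h; linarith [hy.1]
    · intro y hy
      rw [interior_Ioc] at hy
      have hy0 : (0:ℝ) < y := hy.1
      have hy1 : y < 1 := hy.2
      have h1 : HasDerivAt (fun x : ℝ => -Real.log x) (-y⁻¹) y := (Real.hasDerivAt_log hy0.ne').neg
      have h2 : HasDerivAt (fun x : ℝ => 2 * (1 - x) / (1 + x))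
          ((-2 * (1 + y) - 2 * (1 - y) * 1) / (1 + y) ^ 2) y := by
        apply HasDerivAt.div
        · simpa using ((hasDerivAt_id y).const_sub 1).const_mul 2
        · simpa using (hasDerivAt_id y).const_add 1
        · linarith
      have : HasDerivAt (fun x => -Real.log x - 2 * (1 - x) / (1 + x)) _ y := h1.sub h2
      exact this.hasDerivWithinAt.congr_deriv (by ring)
    · intro y hy
      rw [interior_Ioc] at hy
      have hy0 : (0:ℝ) < y := hy.1
      have hy1 : y < 1 := hy.2
      have h4 : 4 * y < (1 + y) ^ 2 := by nlinarith [sq_nonneg (1 - y)]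
      have : 4 / (1 + y) ^ 2 < y⁻¹ := by
        rw [div_lt_iff₀ (by positivity), inv_mul_eq_div, lt_div_iff₀ hy0]
        nlinarith
      linarith
  have h := key ⟨hx0, hx1.le⟩ ⟨zero_lt_one, le_refl 1⟩ hx1
  simp only [Real.log_one] at h
  have heq : (2:ℝ) * (1 - 1) / (1 + 1) = 0 := by norm_num
  rw [heq] at h
  linarith

lemma auxF1_mono : StrictMonoOn auxF1 (Set.Ioo 0 1) := by
  have hderiv : ∀ y ∈ Set.Ioo (0:ℝ) 1, HasDerivAt auxF1
      (1 / (1 - y) + (Real.log 2 - Real.log (1 + y)) + y * (-(1 / (1 + y)))) y := by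
    intro y hy
    obtain ⟨hy0, hy1⟩ := hy
    have h1 : HasDerivAt (fun x : ℝ => -Real.log (1 - x)) (1 / (1 - y)) y := by
      have : HasDerivAt (fun x : ℝ => Real.log (1 - x)) (-1 / (1 - y)) y := by
        have hin : HasDerivAt (fun x : ℝ => 1 - x) (-1) y := by
          simpa using (hasDerivAt_id y).const_sub 1
        simpa using hin.log (by linarith)
      simpa [neg_div] using (show HasDerivAt (fun x => -Real.log (1 - x)) _ y from this.neg)
    have h2 : HasDerivAt (fun x : ℝ => x * (Real.log 2 - Real.log (1 + x)))
        (1 * (Real.log 2 - Real.log (1 + y)) + y * (-(1 / (1 + y)))) y := by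
      apply (hasDerivAt_id y).mul
      have hin : HasDerivAt (fun x : ℝ => 1 + x) 1 y := by
        simpa using (hasDerivAt_id y).const_add 1
      simpa [one_div] using (hin.log (by linarith)).const_sub (Real.log 2)
    have : HasDerivAt auxF1 _ y := h1.add h2
    convert this using 1
    ring
  apply strictMonoOn_of_hasDerivWithinAt_pos (convex_Ioo (0:ℝ) 1)
    (fun y hy => (hderiv y hy).continuousAt.continuousWithinAt)
    (fun y hy => ((hderiv y (interior_subset hy))).hasDerivWithinAt)
  intro y hy
  rw [interior_Ioo] at hy
  obtain ⟨hy0, hy1⟩ := hy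
  have ha : 1 < 1 / (1 - y) := by rw [lt_div_iff₀ (by linarith : (0:ℝ) < 1 - y)]; nlinarith
  have hb : y / (1 + y) < 1 := (div_lt_one (by linarith)).2 (by linarith)
  have hc : Real.log (1 + y) < Real.log 2 := Real.log_lt_log (by linarith) (by linarith)
  have : y * (-(1 / (1 + y))) = -(y / (1 + y)) := by ring
  rw [this]
  linarith

lemma auxG_mono : StrictMonoOn auxG (Set.Ioo 0 1) := by
  have hderiv : ∀ y ∈ Set.Ioo (0:ℝ) 1, HasDerivAt auxG
      (((1 + 4 * y ^ 2 - y ^ 4) * (-Real.log y) - (1 + y ^ 2) * (1 - y ^ 2)) / (1 - y ^ 2) ^ 2) y := by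
    intro y hy
    obtain ⟨hy0, hy1⟩ := hy
    have hden : (1 : ℝ) - y ^ 2 ≠ 0 := by nlinarith
    have hu : HasDerivAt (fun x : ℝ => x * (1 + x ^ 2)) (1 * (1 + y ^ 2) + y * (2 * y)) y := by
      apply (hasDerivAt_id y).mul
      simpa using (hasDerivAt_pow 2 y).const_add 1
    have hv : HasDerivAt (fun x : ℝ => 1 - x ^ 2) (-(2 * y)) y := by
      simpa using (hasDerivAt_pow 2 y).const_sub 1
    have hq : HasDerivAt (fun x : ℝ => x * (1 + x ^ 2) / (1 - x ^ 2)) _ y := hu.div hv hden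
    have hl : HasDerivAt (fun x : ℝ => -Real.log x) (-(1 / y)) y := by
      simpa [one_div] using (show HasDerivAt (fun x => -Real.log x) _ y from (Real.hasDerivAt_log hy0.ne').neg)
    have : HasDerivAt auxG _ y := hq.mul hl
    convert this using 1
    field_simp
    ring
  apply strictMonoOn_of_hasDerivWithinAt_pos (convex_Ioo (0:ℝ) 1)
    (fun y hy => (hderiv y hy).continuousAt.continuousWithinAt)
    (fun y hy => ((hderiv y (interior_subset hy))).hasDerivWithinAt)
  intro y hy
  rw [interior_Ioo] at hy
  obtain ⟨hy0, hy1⟩ := hy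
  have hA : (0:ℝ) < 1 + 4 * y ^ 2 - y ^ 4 := by
    have h4 : y ^ 4 < 1 := pow_lt_one₀ hy0.le hy1 (by norm_num)
    nlinarith [sq_nonneg y]
  have hlog := auxLogLt hy0 hy1
  have h1 : (1 + 4 * y ^ 2 - y ^ 4) * (2 * (1 - y) / (1 + y))
      < (1 + 4 * y ^ 2 - y ^ 4) * (-Real.log y) := by
    exact mul_lt_mul_of_pos_left hlog hA
  have h2 : (1 + y ^ 2) * (1 - y ^ 2) ≤ (1 + 4 * y ^ 2 - y ^ 4) * (2 * (1 - y) / (1 + y)) := by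
    rw [mul_div_assoc', le_div_iff₀ (by linarith : (0:ℝ) < 1 + y)]
    nlinarith [sq_nonneg (1 - y), mul_nonneg (mul_nonneg (sq_nonneg (1 - y)) hy0.le) (sq_nonneg y)]
  apply div_pos (by linarith) (pow_pos (by nlinarith : (0:ℝ) < 1 - y ^ 2) 2)

lemma rate_eq' {x : ℝ} (hx0 : 0 < x) (hx1 : x < 1) :
    -((1 - x) * (Real.log (1 - x) / Real.log 2))
      - (x / Real.log 2) * (Real.log ((1 - x ^ 2) / 2) + (-Real.log x)
          - (-(2 * Real.log x)) / (1 - x ^ 2))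
      = (auxF1 x + auxG x) / Real.log 2 := by
  have h1x : (0:ℝ) < 1 - x := by linarith
  have h1xx : (0:ℝ) < 1 - x ^ 2 := by nlinarith
  have hlog2 : Real.log 2 ≠ 0 := (Real.log_pos one_lt_two).ne'
  unfold auxF1 auxG
  rw [show (1:ℝ) - x ^ 2 = (1 - x) * (1 + x) by ring,
    Real.log_div (by nlinarith) two_ne_zero,
    Real.log_mul (by linarith) (by linarith)]
  field_simp
  ring

lemma rate_eq {Λ Q : ℝ} (hΛ : 0 < Λ) (hQ : 0 < Q) :
    quantLaplaceRate Λ Q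
      = (auxF1 (Real.exp (-Λ * Q / 2)) + auxG (Real.exp (-Λ * Q / 2))) / Real.log 2 := by
  have hx0 : 0 < Real.exp (-Λ * Q / 2) := Real.exp_pos _
  have hx1 : Real.exp (-Λ * Q / 2) < 1 := by
    rw [Real.exp_lt_one_iff]; nlinarith
  have h := rate_eq' hx0 hx1
  rw [← h]
  unfold quantLaplaceRate
  rw [Real.logb, show Real.exp (-Λ * Q) = Real.exp (-Λ * Q / 2) ^ 2 by
      rw [sq, ← Real.exp_add]; ring_nf,
    show Λ * Q / 2 = -Real.log (Real.exp (-Λ * Q / 2)) by rw [Real.log_exp]; ring,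
    show Λ * Q = -(2 * Real.log (Real.exp (-Λ * Q / 2))) by rw [Real.log_exp]; ring]

theorem quantLaplaceRate_strictAnti_and_tendsto_zero (Λ : ℝ) (hΛ : 0 < Λ) :
    StrictAntiOn (fun Q => quantLaplaceRate Λ Q) (Set.Ioi 0) ∧
      Filter.Tendsto (fun Q => quantLaplaceRate Λ Q) Filter.atTop (nhds 0) := by
  have hlog2 : (0:ℝ) < Real.log 2 := Real.log_pos one_lt_two
  have hmem : ∀ Q : ℝ, 0 < Q → Real.exp (-Λ * Q / 2) ∈ Set.Ioo (0:ℝ) 1 := by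
    intro Q hQ
    refine ⟨Real.exp_pos _, ?_⟩
    rw [Real.exp_lt_one_iff]; nlinarith
  constructor
  · intro Q1 hQ1 Q2 hQ2 h12
    rw [Set.mem_Ioi] at hQ1 hQ2
    simp only
    rw [rate_eq hΛ hQ1, rate_eq hΛ hQ2]
    have hlt : Real.exp (-Λ * Q2 / 2) < Real.exp (-Λ * Q1 / 2) := by
      apply Real.exp_lt_exp.2; nlinarith
    have h1 := auxF1_mono (hmem Q2 hQ2) (hmem Q1 hQ1) hlt
    have h2 := auxG_mono (hmem Q2 hQ2) (hmem Q1 hQ1) hlt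
    have hsum : auxF1 (rexp (-Λ * Q2 / 2)) + auxG (rexp (-Λ * Q2 / 2))
        < auxF1 (rexp (-Λ * Q1 / 2)) + auxG (rexp (-Λ * Q1 / 2)) := by linarith
    gcongr

  · have hxlim : Filter.Tendsto (fun Q : ℝ => Real.exp (-Λ * Q / 2)) Filter.atTop (nhds 0) := by
      apply Real.tendsto_exp_atBot.comp
      have h : Filter.Tendsto (fun Q : ℝ => (-Λ / 2) * Q) Filter.atTop Filter.atBot :=
        tendsto_id.const_mul_atTop_of_neg (by linarith)
      exact h.congr (fun Q => by ring)
    have hxloglim : Filter.Tendsto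
        (fun Q : ℝ => Real.exp (-Λ * Q / 2) * Real.log (Real.exp (-Λ * Q / 2)))
        Filter.atTop (nhds 0) := by
      have h := ((tendsto_pow_mul_exp_neg_atTop_nhds_zero 1).comp
        (tendsto_id.const_mul_atTop (r := Λ / 2) (by linarith))).neg
      simp only [neg_zero] at h
      apply h.congr
      intro Q
      simp only [Function.comp_apply, pow_one, Real.log_exp, id]
      ring_nf
    have h1 : Filter.Tendsto (fun Q : ℝ => auxF1 (Real.exp (-Λ * Q / 2)))
        Filter.atTop (nhds 0) := by
      unfold auxF1
      have hsub : Filter.Tendsto (fun Q : ℝ => 1 - Real.exp (-Λ * Q / 2))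
          Filter.atTop (nhds 1) := by
        simpa using (tendsto_const_nhds (x := (1:ℝ))).sub hxlim
      have hadd : Filter.Tendsto (fun Q : ℝ => 1 + Real.exp (-Λ * Q / 2))
          Filter.atTop (nhds 1) := by
        simpa using (tendsto_const_nhds (x := (1:ℝ))).add hxlim
      have hlogsub : Filter.Tendsto (fun Q : ℝ => Real.log (1 - Real.exp (-Λ * Q / 2)))
          Filter.atTop (nhds 0) := by
        have := (Real.continuousAt_log one_ne_zero).tendsto.comp hsub
        simpa [Function.comp_def] using this
      have hlogadd : Filter.Tendsto (fun Q : ℝ => Real.log (1 + Real.exp (-Λ * Q / 2)))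
          Filter.atTop (nhds 0) := by
        have := (Real.continuousAt_log one_ne_zero).tendsto.comp hadd
        simpa [Function.comp_def] using this
      have := hlogsub.neg.add (hxlim.mul ((tendsto_const_nhds (x := Real.log 2)).sub hlogadd))
      simpa using this
    have h2 : Filter.Tendsto (fun Q : ℝ => auxG (Real.exp (-Λ * Q / 2)))
        Filter.atTop (nhds 0) := by
      unfold auxG
      have hsq : Filter.Tendsto (fun Q : ℝ => Real.exp (-Λ * Q / 2) ^ 2)
          Filter.atTop (nhds 0) := by
        simpa using hxlim.pow 2
      have hfrac : Filter.Tendsto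
          (fun Q : ℝ => (1 + Real.exp (-Λ * Q / 2) ^ 2) / (1 - Real.exp (-Λ * Q / 2) ^ 2))
          Filter.atTop (nhds 1) := by
        have hn : Filter.Tendsto (fun Q : ℝ => 1 + Real.exp (-Λ * Q / 2) ^ 2)
            Filter.atTop (nhds 1) := by simpa using (tendsto_const_nhds (x := (1:ℝ))).add hsq
        have hd : Filter.Tendsto (fun Q : ℝ => 1 - Real.exp (-Λ * Q / 2) ^ 2)
            Filter.atTop (nhds 1) := by simpa using (tendsto_const_nhds (x := (1:ℝ))).sub hsq
        simpa [Pi.div_def] using hn.div hd one_ne_zero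
      have := (hxloglim.neg.mul hfrac)
      simp only [neg_zero, zero_mul] at this
      apply this.congr
      intro Q
      ring
    have hmain := (h1.add h2).div_const (Real.log 2)
    simp only [add_zero, zero_div] at hmain
    apply hmain.congr'
    filter_upwards [Filter.eventually_gt_atTop 0] with Q hQ
    exact (rate_eq hΛ hQ).symm
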